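/- Let R be a commutative Noetherian local ring, I an ideal, and x1,...,xs an R-regular sequence contained in I with J_i = (x1,...,x_i), and suppose J_i ∩ I^r = J_i*I^(r-1) for all i = 1,...,s-1 (for a fixed r ≥ 1). Then for all i = 1,...,s: (J_{i-1}*I^r : x_i) ∩ I^r = J_{i-1}*I^(r-1). -/

import Mathlib

/-- The ideal generated by the first `i` elements of the sequence `x`. -/
def firstIdeal {R : Type*} [CommRing R] {s : ℕ} (x : Fin s → R) (i : ℕ) : Ideal R :=
  Ideal.span (x '' {j : Fin s | (j : ℕ) < i})

/-- `R` Noetherian local, `x1,…,xs` a regular sequence contained in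
`I`, and suppose `J_i ∩ I^r = J_i*I^(r-1)` for `1 ≤ i ≤ s-1` (fixed `r ≥ 1`).
Then `(J_{i-1}*I^r : x_i) ∩ I^r = J_{i-1}*I^(r-1)` for all `1 ≤ i ≤ s`. -/
theorem stmt_10 {R : Type*} [CommRing R] [IsNoetherianRing R] [IsLocalRing R]
    (I : Ideal R) (s : ℕ) (x : Fin s → R) (hxI : ∀ i, x i ∈ I)
    (hreg : ∀ i : Fin s, ∀ r : R,
      r * x i ∈ firstIdeal x i → r ∈ firstIdeal x i)
    (hprop : Ideal.span (Set.range x) ≠ ⊤)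
    (r : ℕ) (hr : 1 ≤ r)
    (hVV : ∀ i : ℕ, 1 ≤ i → i ≤ s - 1 →
      firstIdeal x i ⊓ I ^ r = firstIdeal x i * I ^ (r - 1)) :
    ∀ i : ℕ, ∀ hi1 : 1 ≤ i, ∀ hi2 : i ≤ s,
      (firstIdeal x (i - 1) * I ^ r).colon (Ideal.span {x ⟨i - 1, by omega⟩}) ⊓ I ^ r =
        firstIdeal x (i - 1) * I ^ (r - 1) := by
  intro i hi1 hi2
  have hJI : firstIdeal x (i - 1) ≤ I := by
    rw [firstIdeal, Ideal.span_le]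
    rintro y ⟨j, -, rfl⟩
    exact hxI j
  have hsub : firstIdeal x (i - 1) * I ^ (r - 1) ≤ I ^ r := by
    calc firstIdeal x (i - 1) * I ^ (r - 1) ≤ I * I ^ (r - 1) :=
          Ideal.mul_mono hJI le_rfl
      _ = I ^ r := by
          rw [← pow_succ']
          congr 1
          omega
  apply le_antisymm
  · rintro a ⟨ha1, ha2⟩
    rw [SetLike.mem_coe, Ideal.mem_colon_span_singleton] at ha1
    have haJ : a ∈ firstIdeal x (i - 1) := by
      refine hreg ⟨i - 1, by omega⟩ a ?_
      exact Ideal.mul_le_left ha1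
    rcases Nat.lt_or_ge i 2 with h | h
    · have h0 : i - 1 = 0 := by omega
      rw [h0] at haJ ⊢
      have : firstIdeal x 0 = ⊥ := by
        simp [firstIdeal]
      rw [this] at haJ ⊢
      simp only [Ideal.mem_bot] at haJ
      simp [haJ]
    · have := hVV (i - 1) (by omega) (by omega)
      have : a ∈ firstIdeal x (i - 1) ⊓ I ^ r := ⟨haJ, ha2⟩
      rwa [hVV (i - 1) (by omega) (by omega)] at this
  · intro a ha
    refine ⟨?_, hsub ha⟩
    rw [SetLike.mem_coe, Ideal.mem_colon_span_singleton]
    have : a * x ⟨i - 1, by omega⟩ ∈ (firstIdeal x (i - 1) * I ^ (r - 1)) * I :=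
      Ideal.mul_mem_mul ha (hxI _)
    rw [mul_assoc, ← pow_succ] at this
    have hr1 : r - 1 + 1 = r := by omega
    rwa [hr1] at this
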